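/- arXiv:1310.5330 — 2 statements merged into one kernel-verified Lean document; each statement's English description precedes it below -/
import Mathlib

section
/- There is a unique formal power series solution h̃₀(x) = Σ_{k≥4} c_k x^{-k} (with no terms of order x^{-1}, x^{-2}, x^{-3}) of the equation h'' + h'/x − h − h²/2 − (392/625)x^{-4} = 0, its leading coefficient is c₄ = −392/625, and all coefficients c_k with k odd vanish. -/
open PowerSeries Finset

/-- Coefficients of the unique formal solution, defined by the recursion. -/
noncomputable def pc : ℕ → ℂ
  | 0 => 0
  | 1 => 0
  | 2 => 0
  | 3 => 0
  | (n+4) => ((n : ℂ) + 2)^2 * pc (n+2)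
      - (1/2) * ∑ i ∈ (Finset.Icc 4 n).attach, pc i.1 * pc (n+4-i.1)
      - (if n = 0 then 392/625 else 0)
  decreasing_by
  · omega
  · have := Finset.mem_Icc.mp i.2; omega
  · have := Finset.mem_Icc.mp i.2; omega

lemma pc_lt_four : ∀ n < 4, pc n = 0 := by
  intro n hn
  interval_cases n <;> simp [pc]

lemma pc_succ (n : ℕ) : pc (n+4) = ((n : ℂ) + 2)^2 * pc (n+2)
    - (1/2) * ∑ i ∈ Finset.Icc 4 n, pc i * pc (n+4-i)
    - (if n = 0 then 392/625 else 0) := by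
  rw [pc, ← Finset.sum_attach (Finset.Icc 4 n) (fun i => pc i * pc (n+4-i))]

/-- The Painlevé-type operator. -/
noncomputable def Eop (H : PowerSeries ℂ) : PowerSeries ℂ :=
  PowerSeries.X ^ 4 * (PowerSeries.derivative ℂ (PowerSeries.derivative ℂ H))
    + PowerSeries.X ^ 3 * (PowerSeries.derivative ℂ H)
    - H - PowerSeries.C (1 / 2 : ℂ) * H ^ 2
    - PowerSeries.C (392 / 625 : ℂ) * PowerSeries.X ^ 4

lemma coeff_Eop_add4 (H : PowerSeries ℂ) (n : ℕ) :
    coeff (n+4) (Eop H) = ((n : ℂ) + 2)^2 * coeff (n+2) H - coeff (n+4) H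
      - (1/2) * ∑ i ∈ range (n+5), coeff i H * coeff (n+4-i) H
      - (if n = 0 then 392/625 else 0) := by
  have h1 : coeff (n+4) (PowerSeries.X ^ 4 *
      (PowerSeries.derivative ℂ (PowerSeries.derivative ℂ H)))
      = ((n:ℂ)+2) * ((n:ℂ)+1) * coeff (n+2) H := by
    rw [coeff_X_pow_mul, coeff_derivative, coeff_derivative]
    push_cast; ring
  have h2 : coeff (n+4) (PowerSeries.X ^ 3 * (PowerSeries.derivative ℂ H))
      = ((n:ℂ)+2) * coeff (n+2) H := by
    have : n + 4 = (n+1) + 3 := by omega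
    rw [this, coeff_X_pow_mul, coeff_derivative]
    push_cast; ring
  have h3 : coeff (n+4) (PowerSeries.C (1/2 : ℂ) * H ^ 2)
      = (1/2) * ∑ i ∈ range (n+5), coeff i H * coeff (n+4-i) H := by
    rw [coeff_C_mul, sq, coeff_mul, Finset.Nat.sum_antidiagonal_eq_sum_range_succ_mk]
  have h4 : coeff (n+4) (PowerSeries.C (392/625 : ℂ) * PowerSeries.X ^ 4)
      = (if n = 0 then (392 : ℂ)/625 else 0) := by
    rw [coeff_C_mul, coeff_X_pow]
    by_cases h : n = 0 <;> simp [h]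
  simp only [Eop, map_sub, map_add, h1, h2, h3, h4]
  ring

lemma coeff_Eop_lt4 {H : PowerSeries ℂ} (h0 : ∀ k < 4, coeff k H = 0)
    {n : ℕ} (hn : n < 4) : coeff n (Eop H) = 0 := by
  have h1 : coeff n (PowerSeries.X ^ 4 *
      (PowerSeries.derivative ℂ (PowerSeries.derivative ℂ H))) = 0 := by
    rw [coeff_X_pow_mul', if_neg (by omega)]
  have h2 : coeff n (PowerSeries.X ^ 3 * (PowerSeries.derivative ℂ H)) = 0 := by
    rw [coeff_X_pow_mul']
    by_cases h : 3 ≤ n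
    · rw [if_pos h, coeff_derivative]
      have hn3 : n = 3 := by omega
      subst hn3
      simp [h0 1 (by norm_num)]
    · rw [if_neg h]
  have h3 : coeff n (PowerSeries.C (1/2 : ℂ) * H ^ 2) = 0 := by
    rw [coeff_C_mul, sq, coeff_mul]
    rw [Finset.sum_eq_zero, mul_zero]
    intro p hp
    rw [Finset.HasAntidiagonal.mem_antidiagonal] at hp
    have : p.1 < 4 := by omega
    rw [h0 p.1 this, zero_mul]
  have h4 : coeff n (PowerSeries.C (392/625 : ℂ) * PowerSeries.X ^ 4) = 0 := by
    rw [coeff_C_mul, coeff_X_pow, if_neg (by omega), mul_zero]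
  simp only [Eop, map_sub, map_add, h1, h2, h3, h4, h0 n hn]
  ring

lemma sum_range_eq_Icc {f : ℕ → ℂ} (m : ℕ) (hf : ∀ k < 4, f k = 0) :
    ∑ i ∈ range (m+5), f i * f (m+4-i) = ∑ i ∈ Finset.Icc 4 m, f i * f (m+4-i) := by
  refine (Finset.sum_subset ?_ ?_).symm
  · intro i hi
    rw [Finset.mem_Icc] at hi
    rw [Finset.mem_range]; omega
  · intro i hi hni
    rw [Finset.mem_range] at hi
    rw [Finset.mem_Icc] at hni
    push_neg at hni
    by_cases h : i < 4
    · rw [hf i h, zero_mul]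
    · rw [hf (m+4-i) (by omega), mul_zero]

lemma sol_coeff {H : PowerSeries ℂ} (h0 : ∀ k < 4, coeff k H = 0)
    (heq : Eop H = 0) : ∀ n, coeff n H = pc n := by
  intro n
  induction n using Nat.strong_induction_on with
  | _ n ih =>
    by_cases hn : n < 4
    · rw [h0 n hn, pc_lt_four n hn]
    · obtain ⟨m, rfl⟩ : ∃ m, n = m + 4 := ⟨n - 4, by omega⟩
      have hc : coeff (m+4) (Eop H) = 0 := by rw [heq]; simp
      rw [coeff_Eop_add4] at hc
      have hsum : ∑ i ∈ range (m+5), coeff i H * coeff (m+4-i) H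
          = ∑ i ∈ Finset.Icc 4 m, pc i * pc (m+4-i) := by
        rw [sum_range_eq_Icc m h0]
        refine Finset.sum_congr rfl fun i hi => ?_
        rw [Finset.mem_Icc] at hi
        rw [ih i (by omega), ih (m+4-i) (by omega)]
      rw [hsum, ih (m+2) (by omega)] at hc
      rw [pc_succ]
      linear_combination -hc

lemma pc_four : pc 4 = -392/625 := by
  have := pc_succ 0
  simp only [Nat.zero_add, if_pos rfl] at this
  rw [this]
  norm_num [pc_lt_four 2 (by norm_num)]

lemma pc_odd : ∀ n, Odd n → pc n = 0 := by
  intro n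
  induction n using Nat.strong_induction_on with
  | _ n ih =>
    intro hodd
    by_cases hn : n < 4
    · exact pc_lt_four n hn
    · obtain ⟨m, rfl⟩ : ∃ m, n = m + 4 := ⟨n - 4, by omega⟩
      rw [pc_succ]
      have h1 : pc (m+2) = 0 := by
        refine ih (m+2) (by omega) ?_
        rcases hodd with ⟨k, hk⟩; exact ⟨k-1, by omega⟩
      have h2 : ∑ i ∈ Finset.Icc 4 m, pc i * pc (m+4-i) = 0 := by
        refine Finset.sum_eq_zero fun i hi => ?_
        rw [Finset.mem_Icc] at hi
        rcases Nat.even_or_odd i with he | ho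
        · have : Odd (m+4-i) := by
            rcases hodd with ⟨k, hk⟩; rcases he with ⟨j, hj⟩
            exact ⟨k - j, by omega⟩
          rw [ih (m+4-i) (by omega) this, mul_zero]
        · rw [ih i (by omega) ho, zero_mul]
      have h3 : m ≠ 0 := by rintro rfl; simp [Nat.odd_iff] at hodd
      rw [h1, h2, if_neg h3]
      ring

lemma Eop_mk_pc : Eop (PowerSeries.mk pc) = 0 := by
  ext n
  rw [map_zero]
  by_cases hn : n < 4
  · exact coeff_Eop_lt4 (fun k hk => by rw [coeff_mk]; exact pc_lt_four k hk) hn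
  · obtain ⟨m, rfl⟩ : ∃ m, n = m + 4 := ⟨n - 4, by omega⟩
    rw [coeff_Eop_add4]
    simp only [coeff_mk]
    rw [sum_range_eq_Icc m pc_lt_four, pc_succ]
    ring

/-- In the variable `t = 1/x` (under which `d/dx = -t² d/dt`), the normalized
Painlevé I equation `h'' + h'/x - h - h²/2 - (392/625) x⁻⁴ = 0` becomes
`t⁴ H'' + t³ H' - H - H²/2 - (392/625) t⁴ = 0` for `H(t) = h(1/t)`.
There is a unique formal power series solution `H = Σ_{k ≥ 4} c_k t^k`
(no terms of order `< 4`); its leading coefficient is `c₄ = -392/625`, and all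
odd-index coefficients vanish. -/
theorem normalizedP1_unique_formal_solution :
    (∃! H : PowerSeries ℂ,
      (∀ k < 4, PowerSeries.coeff k H = 0) ∧
      (PowerSeries.X ^ 4 * (PowerSeries.derivative ℂ (PowerSeries.derivative ℂ H))
        + PowerSeries.X ^ 3 * (PowerSeries.derivative ℂ H)
        - H - PowerSeries.C (1 / 2 : ℂ) * H ^ 2
        - PowerSeries.C (392 / 625 : ℂ) * PowerSeries.X ^ 4 = 0)) ∧
    (∀ H : PowerSeries ℂ,
      ((∀ k < 4, PowerSeries.coeff k H = 0) ∧
      (PowerSeries.X ^ 4 * (PowerSeries.derivative ℂ (PowerSeries.derivative ℂ H))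
        + PowerSeries.X ^ 3 * (PowerSeries.derivative ℂ H)
        - H - PowerSeries.C (1 / 2 : ℂ) * H ^ 2
        - PowerSeries.C (392 / 625 : ℂ) * PowerSeries.X ^ 4 = 0)) →
      PowerSeries.coeff 4 H = -392 / 625 ∧
      ∀ k : ℕ, Odd k → PowerSeries.coeff k H = 0) := by
  constructor
  · refine ⟨PowerSeries.mk pc, ⟨fun k hk => by rw [coeff_mk]; exact pc_lt_four k hk,
      Eop_mk_pc⟩, ?_⟩
    rintro H ⟨h0, heq⟩
    ext n
    rw [sol_coeff h0 heq n, coeff_mk]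
  · rintro H ⟨h0, heq⟩
    constructor
    · rw [sol_coeff h0 heq 4, pc_four]
    · intro k hk
      rw [sol_coeff h0 heq k]
      exact pc_odd k hk
end

section
/- The unique solution H analytic at p = 0 of the convolution equation (p² − 1)·H(p) = (196/1875)·p³ + (p ∗ H)(p) + (1/2)·(H ∗ H)(p) is an odd function: H(−p) = −H(p) on its domain of analyticity. -/
open Metric

/-- Convolution along the straight segment from `0` to `p`:
`(f ∗ g)(p) = ∫₀^p f(s) g(p - s) ds = p ∫₀¹ f(tp) g(p - tp) dt`. -/
noncomputable def segConv (f g : ℂ → ℂ) (p : ℂ) : ℂ :=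
  p * ∫ t in (0 : ℝ)..1, f ((t : ℂ) * p) * g (p - (t : ℂ) * p)

lemma segConv_negneg (f g : ℂ → ℂ) (p : ℂ) :
    segConv (fun s => -f (-s)) (fun s => -g (-s)) p = - segConv f g (-p) := by
  simp only [segConv, neg_mul_neg, neg_mul, neg_neg]
  congr 1
  apply intervalIntegral.integral_congr
  intro t _
  simp only [mul_neg]
  ring_nf

lemma segConv_id_neg (g : ℂ → ℂ) (p : ℂ) :
    segConv (fun s => s) (fun s => -g (-s)) p = - segConv (fun s => s) g (-p) := by
  simp only [segConv, neg_mul_neg, neg_mul, neg_neg]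
  congr 1
  apply intervalIntegral.integral_congr
  intro t _
  simp only [mul_neg]
  ring_nf

/-- The unique solution `H` analytic at `p = 0` of the convolution equation
`(p² - 1) H = (196/1875) p³ + p ∗ H + (1/2) H ∗ H` is an odd function. -/
theorem borel_H0_odd (r : ℝ) (hr : 0 < r) (H : ℂ → ℂ)
    (hH : AnalyticOnNhd ℂ H (ball (0 : ℂ) r))
    (heq : ∀ p ∈ ball (0 : ℂ) r,
      (p ^ 2 - 1) * H p
        = (196 / 1875) * p ^ 3 + segConv (fun s => s) H p
          + (1 / 2) * segConv H H p)
    (huniq : ∀ G : ℂ → ℂ, AnalyticOnNhd ℂ G (ball (0 : ℂ) r) →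
      (∀ p ∈ ball (0 : ℂ) r,
        (p ^ 2 - 1) * G p
          = (196 / 1875) * p ^ 3 + segConv (fun s => s) G p
            + (1 / 2) * segConv G G p) →
      ∀ p ∈ ball (0 : ℂ) r, G p = H p) :
    ∀ p ∈ ball (0 : ℂ) r, H (-p) = -H p := by
  have hball : ∀ p : ℂ, p ∈ ball (0 : ℂ) r → -p ∈ ball (0 : ℂ) r := by
    intro p hp
    simpa [mem_ball_zero_iff] using hp
  have hG : AnalyticOnNhd ℂ (fun s => -H (-s)) (ball (0 : ℂ) r) := by
    intro p hp
    exact ((hH (-p) (hball p hp)).comp (analyticAt_id.neg)).neg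
  have hGeq : ∀ p ∈ ball (0 : ℂ) r,
      (p ^ 2 - 1) * (fun s => -H (-s)) p
        = (196 / 1875) * p ^ 3 + segConv (fun s => s) (fun s => -H (-s)) p
          + (1 / 2) * segConv (fun s => -H (-s)) (fun s => -H (-s)) p := by
    intro p hp
    have := heq (-p) (hball p hp)
    rw [segConv_id_neg, segConv_negneg]
    have hsq : ((-p) ^ 2 - 1) = (p ^ 2 - 1) := by ring
    rw [hsq] at this
    simp only []
    linear_combination -this
  have key := huniq (fun s => -H (-s)) hG hGeq
  intro p hp
  have := key p hp
  beta_reduce at this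
  linear_combination -this
end
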